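/- Let X, Y be real symmetric n_x×n_x matrices such that the block matrix [[X, I],[I, Y]] is positive definite, and let Π, Ξ ∈ ℝ^{n_x×n_x} satisfy ΞΠ = I − YX. Then Π and Ξ are invertible and, for any B₂ ∈ ℝ^{n_x×n_u} and C₂ ∈ ℝ^{n_y×n_x}, the block-triangular matrices [[I_{n_u}, 0],[YB₂, Ξ]] ∈ ℝ^{(n_u+n_x)×(n_u+n_x)} and [[I_{n_y}, C₂X],[0, Π]] ∈ ℝ^{(n_y+n_x)×(n_y+n_x)} are invertible. -/

import Mathlib

open Matrix

/-- If `X, Y` are real symmetric `n_x × n_x` matrices with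
`[[X, I],[I, Y]]` positive definite and `Ξ·Π = I − YX`, then `Π` and `Ξ` are invertible and,
for any `B₂`, `C₂`, the block triangular matrices `[[I, 0],[YB₂, Ξ]]` and `[[I, C₂X],[0, Π]]`
are invertible.  (Here `Pm` plays the role of `Π` and `Ξ` the role of `Ξ`.) -/
theorem pi_xi_invertible {nx nu ny : ℕ}
    (X Y : Matrix (Fin nx) (Fin nx) ℝ) (hX : X.IsSymm) (hY : Y.IsSymm)
    (hPD : (fromBlocks X (1 : Matrix (Fin nx) (Fin nx) ℝ) 1 Y).PosDef)
    (Pm Ξ : Matrix (Fin nx) (Fin nx) ℝ) (hΞP : Ξ * Pm = 1 - Y * X)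
    (B₂ : Matrix (Fin nx) (Fin nu) ℝ) (C₂ : Matrix (Fin ny) (Fin nx) ℝ) :
    IsUnit Pm ∧ IsUnit Ξ ∧
    IsUnit (fromBlocks (1 : Matrix (Fin nu) (Fin nu) ℝ) 0 (Y * B₂) Ξ) ∧
    IsUnit (fromBlocks (1 : Matrix (Fin ny) (Fin ny) ℝ) (C₂ * X) 0 Pm) := by
  -- X is positive definite
  have hXpd : X.PosDef := by
    refine posDef_iff_dotProduct_mulVec.mpr ⟨hX, fun x hx => ?_⟩
    have h := hPD.dotProduct_mulVec_pos (x := Sum.elim x 0) (by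
      intro h
      apply hx
      funext i
      exact congrFun h (Sum.inl i))
    simpa [fromBlocks_mulVec, dotProduct, Fintype.sum_sum_type] using h
  have hXdet : IsUnit X.det := isUnit_iff_ne_zero.mpr (ne_of_gt hXpd.det_pos)
  haveI : Invertible X := invertibleOfIsUnitDet X hXdet
  have hblock : (fromBlocks X (1 : Matrix (Fin nx) (Fin nx) ℝ) 1 Y).det
      = X.det * (Y - 1 * ⅟X * 1).det := det_fromBlocks₁₁ _ _ _ _
  have hSchur : (Y - ⅟X).det ≠ 0 := by
    have hpos := hPD.det_pos
    rw [hblock] at hpos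
    simp only [Matrix.one_mul, Matrix.mul_one] at hpos
    intro h
    rw [h, mul_zero] at hpos
    exact lt_irrefl 0 hpos
  -- 1 - Y*X is invertible
  have key : ((1 : Matrix (Fin nx) (Fin nx) ℝ) - Y * X).det ≠ 0 := by
    have h1 : (Y - ⅟X) * X = Y * X - 1 := by
      rw [Matrix.sub_mul, invOf_mul_self]
    have h2 : ((1 : Matrix (Fin nx) (Fin nx) ℝ) - Y * X) = (-1 : ℝ) • ((Y - ⅟X) * X) := by
      rw [h1]; ext i j; simp
    rw [h2, Matrix.det_smul, Matrix.det_mul]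
    intro h
    rcases mul_eq_zero.mp h with h | h
    · exact pow_ne_zero _ (by norm_num : (-1 : ℝ) ≠ 0) h
    · rcases mul_eq_zero.mp h with h | h
      · exact hSchur h
      · exact (ne_of_gt hXpd.det_pos) h
  have hprod : Ξ.det * Pm.det ≠ 0 := by
    rw [← Matrix.det_mul, hΞP]; exact key
  have hΞ : IsUnit Ξ :=
    (Matrix.isUnit_iff_isUnit_det _).mpr (isUnit_iff_ne_zero.mpr (left_ne_zero_of_mul hprod))
  have hPm : IsUnit Pm :=
    (Matrix.isUnit_iff_isUnit_det _).mpr (isUnit_iff_ne_zero.mpr (right_ne_zero_of_mul hprod))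
  refine ⟨hPm, hΞ, ?_, ?_⟩
  · rw [Matrix.isUnit_iff_isUnit_det, det_fromBlocks_zero₁₂, det_one, one_mul]
    exact isUnit_iff_ne_zero.mpr (left_ne_zero_of_mul hprod)
  · rw [Matrix.isUnit_iff_isUnit_det, det_fromBlocks_zero₂₁, det_one, one_mul]
    exact isUnit_iff_ne_zero.mpr (right_ne_zero_of_mul hprod)
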